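/- Let S be a finite nonempty set, β ∈ (0,1) rational, r : S → ℚ, and for each s let A(s) be a nonempty finite set of finitely supported probability distributions on S with rational values. Then the unique fixed point v* of the Bellman operator (T v)(s) = max_{δ ∈ A(s)} (β·r s + (1-β)·∑_t δ t · v t) takes rational values at every state. -/

import Mathlib

/-- If `v s = γ * ∑ t, c s t * v t` with `c` a stochastic matrix and `0 ≤ γ < 1`,
then `v = 0`. -/
lemma bellman_contraction_zero {S : Type*} [Fintype S] [Nonempty S]
    {α : Type*} [Field α] [LinearOrder α] [IsStrictOrderedRing α]
    (c : S → S → α) (hc0 : ∀ s t, 0 ≤ c s t) (hc1 : ∀ s, ∑ t, c s t = 1)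
    (γ : α) (hγ0 : 0 ≤ γ) (hγ1 : γ < 1) (v : S → α)
    (h : ∀ s, v s = γ * ∑ t, c s t * v t) : ∀ s, v s = 0 := by
  set M : α := Finset.univ.sup' Finset.univ_nonempty (fun s => |v s|) with hM
  have hle : ∀ s, |v s| ≤ M := fun s =>
    Finset.le_sup' (fun s => |v s|) (Finset.mem_univ s)
  have hMγ : ∀ s, |v s| ≤ γ * M := by
    intro s
    rw [h s, abs_mul, abs_of_nonneg hγ0]
    have h1 : |∑ t, c s t * v t| ≤ ∑ t, c s t * |v t| := by
      refine (Finset.abs_sum_le_sum_abs _ _).trans ?_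
      refine Finset.sum_le_sum fun t _ => ?_
      rw [abs_mul, abs_of_nonneg (hc0 s t)]
    have h2 : ∑ t, c s t * |v t| ≤ ∑ t, c s t * M :=
      Finset.sum_le_sum fun t _ => mul_le_mul_of_nonneg_left (hle t) (hc0 s t)
    have h3 : ∑ t, c s t * M = M := by rw [← Finset.sum_mul, hc1 s, one_mul]
    exact mul_le_mul_of_nonneg_left (h1.trans (h2.trans_eq h3)) hγ0
  have hMle : M ≤ γ * M := by
    rw [hM]
    exact Finset.sup'_le _ _ fun s _ => hMγ s
  have hM0 : M ≤ 0 := by nlinarith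
  intro s
  have := (hle s).trans hM0
  have := abs_nonneg (v s)
  have : |v s| = 0 := le_antisymm ‹|v s| ≤ 0› ‹0 ≤ |v s|›
  exact abs_eq_zero.mp this

theorem bellman_fixed_point_rational {S : Type*} [Fintype S] [Nonempty S]
    (β : ℚ) (hβ0 : 0 < β) (hβ1 : β < 1) (r : S → ℚ)
    (A : S → Finset (S → ℝ)) (hA : ∀ s, (A s).Nonempty)
    (hdist : ∀ s, ∀ δ ∈ A s, (∀ t, 0 ≤ δ t) ∧ ∑ t, δ t = 1)
    (hrat : ∀ s, ∀ δ ∈ A s, ∀ t, ∃ q : ℚ, δ t = (q : ℝ))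
    (vstar : S → ℝ)
    (hfix : ∀ s, vstar s = (A s).sup' (hA s)
        (fun δ => (β : ℝ) * (r s : ℝ) + (1 - (β : ℝ)) * ∑ t, δ t * vstar t)) :
    ∀ s, ∃ q : ℚ, vstar s = (q : ℝ) := by
  classical
  -- pick an optimal distribution at each state
  have hopt : ∀ s, ∃ δ ∈ A s, (A s).sup' (hA s)
      (fun δ => (β : ℝ) * (r s : ℝ) + (1 - (β : ℝ)) * ∑ t, δ t * vstar t)
      = (β : ℝ) * (r s : ℝ) + (1 - (β : ℝ)) * ∑ t, δ t * vstar t := fun s =>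
    Finset.exists_mem_eq_sup' (hA s) _
  choose δ hδmem hδeq using hopt
  have hfix' : ∀ s, vstar s
      = (β : ℝ) * (r s : ℝ) + (1 - (β : ℝ)) * ∑ t, δ s t * vstar t := fun s =>
    (hfix s).trans (hδeq s)
  -- rational entries
  choose q hq using fun s => hrat s (δ s) (hδmem s)
  have hq0 : ∀ s t, 0 ≤ q s t := by
    intro s t
    have := (hdist s (δ s) (hδmem s)).1 t
    rw [hq s t] at this
    exact_mod_cast this
  have hq1 : ∀ s, ∑ t, q s t = 1 := by
    intro s
    have := (hdist s (δ s) (hδmem s)).2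
    have : ((∑ t, q s t : ℚ) : ℝ) = 1 := by
      push_cast
      simpa [hq s] using this
    exact_mod_cast this
  -- the linear map over ℚ
  set L : (S → ℚ) →ₗ[ℚ] (S → ℚ) :=
    LinearMap.id - Matrix.toLin' (fun s t => (1 - β) * q s t) with hL
  have hLapp : ∀ v : S → ℚ, ∀ s, L v s = v s - (1 - β) * ∑ t, q s t * v t := by
    intro v s
    simp [hL, Matrix.toLin'_apply, Matrix.mulVec, dotProduct,
      Finset.mul_sum, mul_assoc]
    change Matrix.mulVec (fun s t => (1 - β) * q s t) v s = _
    simp [Matrix.mulVec, dotProduct, mul_assoc]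
  have hinj : Function.Injective L := by
    rw [← LinearMap.ker_eq_bot, LinearMap.ker_eq_bot']
    intro v hv
    have hv' : ∀ s, v s = (1 - β) * ∑ t, q s t * v t := by
      intro s
      have := congrFun hv s
      rw [hLapp v s] at this
      simpa [sub_eq_zero] using this
    funext s
    exact bellman_contraction_zero q hq0 hq1 (1 - β) (by linarith) (by linarith) v hv' s
  have hsurj : Function.Surjective L :=
    (LinearMap.injective_iff_surjective).mp hinj
  obtain ⟨w, hw⟩ := hsurj (fun s => β * r s)
  have hw' : ∀ s, w s = β * r s + (1 - β) * ∑ t, q s t * w t := by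
    intro s
    have := congrFun hw s
    rw [hLapp w s] at this
    linarith [this]
  -- compare vstar with the cast of w
  have hu : ∀ s, vstar s - (w s : ℝ)
      = (1 - (β : ℝ)) * ∑ t, δ s t * (vstar t - (w t : ℝ)) := by
    intro s
    have h1 := hfix' s
    have h2 : ((w s : ℚ) : ℝ) = (β : ℝ) * (r s : ℝ)
        + (1 - (β : ℝ)) * ∑ t, δ s t * (w t : ℝ) := by
      rw [hw' s]
      push_cast
      refine congrArg _ (congrArg _ ?_)
      exact Finset.sum_congr rfl fun t _ => by rw [hq s t]
    rw [h1, h2]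
    simp only [mul_sub, Finset.mul_sum, Finset.sum_sub_distrib]
    ring
  have hzero : ∀ s, vstar s - (w s : ℝ) = 0 := by
    have hδ0 : ∀ s t, 0 ≤ δ s t := fun s t => (hdist s (δ s) (hδmem s)).1 t
    have hδ1 : ∀ s, ∑ t, δ s t = 1 := fun s => (hdist s (δ s) (hδmem s)).2
    refine bellman_contraction_zero δ hδ0 hδ1 (1 - (β : ℝ)) ?_ ?_
        (fun s => vstar s - (w s : ℝ)) ?_
    · have : (β : ℝ) < 1 := by exact_mod_cast hβ1
      linarith
    · have : (0 : ℝ) < β := by exact_mod_cast hβ0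
      linarith
    · intro s
      have := hu s
      simpa [mul_sub] using this
  intro s
  exact ⟨w s, by have := hzero s; linarith⟩
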